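/- Arrows comparison: for all unit types U, V and Scalar types T, R, if V→R ⪯ U→T then there exist unit types W₁,…,Wₙ and type variables X₁,…,Xₙ such that U→T ≡ (V→R)[W₁/X₁]…[Wₙ/Xₙ]. -/

import Mathlib

set_option autoImplicit false

namespace Lineal

/-! ### Lineal terms -/

inductive Trm (S : Type) : Type where
  | var : ℕ → Trm S
  | lam : Trm S → Trm S
  | app : Trm S → Trm S → Trm S
  | zero : Trm S
  | smul : S → Trm S → Trm S
  | add : Trm S → Trm S → Trm S

namespace Trm

variable {S : Type}

/-- Basis terms: variables and abstractions. -/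
def IsBasis : Trm S → Prop
  | var _ => True
  | lam _ => True
  | _ => False

/-- de Bruijn shift by `d` of variables `≥ c`. -/
def shift (d : ℕ) : ℕ → Trm S → Trm S
  | c, var k => if k < c then var k else var (k + d)
  | c, lam t => lam (shift d (c + 1) t)
  | c, app t r => app (shift d c t) (shift d c r)
  | _, zero => zero
  | c, smul a t => smul a (shift d c t)
  | c, add t r => add (shift d c t) (shift d c r)

/-- Capture-avoiding substitution `t[s / j]` (de Bruijn). -/
def subst : Trm S → Trm S → ℕ → Trm S
  | var k, s, j => if k = j then s else if j < k then var (k - 1) else var k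
  | lam t, s, j => lam (subst t (shift 1 0 s) (j + 1))
  | app t r, s, j => app (subst t s j) (subst r s j)
  | zero, _, _ => zero
  | smul a t, s, j => smul a (subst t s j)
  | add t r, s, j => add (subst t s j) (subst r s j)

/-- All free variables are `< n`. -/
def ClosedUnder : ℕ → Trm S → Prop
  | n, var k => k < n
  | n, lam t => ClosedUnder (n + 1) t
  | n, app t r => ClosedUnder n t ∧ ClosedUnder n r
  | _, zero => True
  | n, smul _ t => ClosedUnder n t
  | n, add t r => ClosedUnder n t ∧ ClosedUnder n r

/-- Closed terms. -/
def Closed (t : Trm S) : Prop := ClosedUnder 0 t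

def size : Trm S → ℕ
  | var _ => 1
  | lam t => size t + 1
  | app t r => size t + size r + 1
  | zero => 1
  | smul _ t => size t + 1
  | add t r => size t + size r + 1

/-- `(t) r₁ … rₙ`. -/
def appList (t : Trm S) (l : List (Trm S)) : Trm S := l.foldl app t

/-- `t + u₁ + … + uₙ`. -/
def sumList (t : Trm S) (l : List (Trm S)) : Trm S := l.foldl add t

/-- Lifting of a simultaneous substitution under a binder. -/
def msubstLift (ρ : ℕ → Trm S) : ℕ → Trm S
  | 0 => var 0
  | n + 1 => shift 1 0 (ρ n)

/-- Simultaneous substitution of all free variables. -/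
def msubst : (ℕ → Trm S) → Trm S → Trm S
  | ρ, var k => ρ k
  | ρ, lam t => lam (msubst (msubstLift ρ) t)
  | ρ, app t r => app (msubst ρ t) (msubst ρ r)
  | _, zero => zero
  | ρ, smul a t => smul a (msubst ρ t)
  | ρ, add t r => add (msubst ρ t) (msubst ρ r)

end Trm

/-! ### AC equivalence of terms (`+` associative and commutative) -/

inductive ACeq {S : Type} : Trm S → Trm S → Prop
  | refl (t : Trm S) : ACeq t t
  | symm {t u : Trm S} : ACeq t u → ACeq u t
  | trans {t u v : Trm S} : ACeq t u → ACeq u v → ACeq t v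
  | comm (t u : Trm S) : ACeq (Trm.add t u) (Trm.add u t)
  | assoc (t u v : Trm S) : ACeq (Trm.add (Trm.add t u) v) (Trm.add t (Trm.add u v))
  | lamCong {t t' : Trm S} : ACeq t t' → ACeq (Trm.lam t) (Trm.lam t')
  | appCong {t t' r r' : Trm S} : ACeq t t' → ACeq r r' → ACeq (Trm.app t r) (Trm.app t' r')
  | smulCong (a : S) {t t' : Trm S} : ACeq t t' → ACeq (Trm.smul a t) (Trm.smul a t')
  | addCong {t t' r r' : Trm S} : ACeq t t' → ACeq r r' → ACeq (Trm.add t r) (Trm.add t' r')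

/-! ### Reduction -/

/-- `t` is closed and normal (w.r.t. the step relation `St`). -/
def ClosedNormal {S : Type} (St : Trm S → Trm S → Prop) (t : Trm S) : Prop :=
  t.Closed ∧ ∀ u, ¬ St t u

/-- Root rules and one-level contextual closure, parameterised by the step relation `St`
used on proper subterms (both for congruence and for the closed-normal side conditions). -/
inductive Core {S : Type} [CommRing S] (St : Trm S → Trm S → Prop) : Trm S → Trm S → Prop
  -- Elementary rules
  | addZero (t : Trm S) : Core St (Trm.add t Trm.zero) t
  | zeroSmul (t : Trm S) : Core St (Trm.smul 0 t) Trm.zero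
  | oneSmul (t : Trm S) : Core St (Trm.smul 1 t) t
  | smulZero (a : S) : Core St (Trm.smul a Trm.zero) Trm.zero
  | smulSmul (a b : S) (t : Trm S) : Core St (Trm.smul a (Trm.smul b t)) (Trm.smul (a * b) t)
  | smulAdd (a : S) (t r : Trm S) :
      Core St (Trm.smul a (Trm.add t r)) (Trm.add (Trm.smul a t) (Trm.smul a r))
  -- Factorisation rules (side condition : t closed normal)
  | fact1 (a b : S) (t : Trm S) : ClosedNormal St t →
      Core St (Trm.add (Trm.smul a t) (Trm.smul b t)) (Trm.smul (a + b) t)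
  | fact2 (a : S) (t : Trm S) : ClosedNormal St t →
      Core St (Trm.add (Trm.smul a t) t) (Trm.smul (a + 1) t)
  | fact3 (t : Trm S) : ClosedNormal St t →
      Core St (Trm.add t t) (Trm.smul (1 + 1) t)
  -- Application rules
  | appAddL (t r u : Trm S) : ClosedNormal St (Trm.add t r) →
      Core St (Trm.app (Trm.add t r) u) (Trm.add (Trm.app t u) (Trm.app r u))
  | appAddR (u t r : Trm S) : ClosedNormal St (Trm.add t r) →
      Core St (Trm.app u (Trm.add t r)) (Trm.add (Trm.app u t) (Trm.app u r))
  | appSmulL (a : S) (t r : Trm S) : ClosedNormal St t →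
      Core St (Trm.app (Trm.smul a t) r) (Trm.smul a (Trm.app t r))
  | appSmulR (a : S) (r t : Trm S) : ClosedNormal St t →
      Core St (Trm.app r (Trm.smul a t)) (Trm.smul a (Trm.app r t))
  | appZeroL (t : Trm S) : Core St (Trm.app Trm.zero t) Trm.zero
  | appZeroR (t : Trm S) : Core St (Trm.app t Trm.zero) Trm.zero
  -- Beta reduction (b a basis term)
  | beta (t b : Trm S) : Trm.IsBasis b → Core St (Trm.app (Trm.lam t) b) (Trm.subst t b 0)
  -- Contextual closure
  | lamCong {t t' : Trm S} : St t t' → Core St (Trm.lam t) (Trm.lam t')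
  | appL {t t' : Trm S} (r : Trm S) : St t t' → Core St (Trm.app t r) (Trm.app t' r)
  | appR (t : Trm S) {r r' : Trm S} : St r r' → Core St (Trm.app t r) (Trm.app t r')
  | smulCong (a : S) {t t' : Trm S} : St t t' → Core St (Trm.smul a t) (Trm.smul a t')
  | addL {t t' : Trm S} (r : Trm S) : St t t' → Core St (Trm.add t r) (Trm.add t' r)
  | addR (t : Trm S) {r r' : Trm S} : St r r' → Core St (Trm.add t r) (Trm.add t r')

/-- Stratified step relation: `StepN n` is the one-step reduction (modulo AC),
adequate for terms of size at most `n`. -/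
def StepN {S : Type} [CommRing S] : ℕ → Trm S → Trm S → Prop
  | 0, _, _ => False
  | n + 1, t, t' => ∃ u u', ACeq t u ∧ Core (StepN n) u u' ∧ ACeq u' t'

/-- One-step reduction of Lineal, on terms considered modulo AC of `+`. -/
def Step {S : Type} [CommRing S] (t t' : Trm S) : Prop := StepN t.size t t'

/-- Many-step reduction. -/
def RedStar {S : Type} [CommRing S] : Trm S → Trm S → Prop := Relation.ReflTransGen Step

/-- `t` is strongly normalising: every reduction sequence from `t` is finite. -/
def StronglyNormalising {S : Type} [CommRing S] (t : Trm S) : Prop :=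
  Acc (fun a b => Step b a) t

/-- The set of strongly normalising terms. -/
def SNset (S : Type) [CommRing S] : Set (Trm S) := { t | StronglyNormalising t }

end Lineal

namespace Lineal

/-! ### Scalar types -/

inductive STy (S : Type) : Type where
  | var : ℕ → STy S
  | arrow : STy S → STy S → STy S
  | all : STy S → STy S
  | smul : S → STy S → STy S
  | zero : STy S

namespace STy

mutual
  /-- Unit types: `U ::= X | U → T | ∀X.U`. -/
  inductive IsUnit {S : Type} : STy S → Prop
    | var (n : ℕ) : IsUnit (STy.var n)
    | arrow {U T : STy S} : IsUnit U → WF T → IsUnit (STy.arrow U T)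
    | all {U : STy S} : IsUnit U → IsUnit (STy.all U)
  /-- Scalar types: `T ::= U | ∀X.T | α.T | 0̄`. -/
  inductive WF {S : Type} : STy S → Prop
    | unit {U : STy S} : IsUnit U → WF U
    | all {T : STy S} : WF T → WF (STy.all T)
    | smul (a : S) {T : STy S} : WF T → WF (STy.smul a T)
    | zero : WF STy.zero
end

variable {S : Type}

/-- de Bruijn shift of type variables. -/
def shiftTV (d : ℕ) : ℕ → STy S → STy S
  | c, var k => if k < c then var k else var (k + d)
  | c, arrow A B => arrow (shiftTV d c A) (shiftTV d c B)
  | c, all T => all (shiftTV d (c + 1) T)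
  | c, smul a T => smul a (shiftTV d c T)
  | _, zero => zero

/-- `T[U / j]`: capture-avoiding substitution for the type variable `j` (removing it). -/
def substTV : STy S → STy S → ℕ → STy S
  | var k, U, j => if k = j then shiftTV j 0 U else if j < k then var (k - 1) else var k
  | arrow A B, U, j => arrow (substTV A U j) (substTV B U j)
  | all T, U, j => all (substTV T U (j + 1))
  | smul a T, U, j => smul a (substTV T U j)
  | zero, _, _ => zero

/-- Abstract the free type variable `n` of `T` (at depth `c`), so that
`all (closeTV T n 0)` is `∀X.T` where `X` is the free variable `n`. -/
def closeTV : STy S → ℕ → ℕ → STy S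
  | var k, n, c => if k < c then var k else if k = n + c then var c else var (k + 1)
  | arrow A B, n, c => arrow (closeTV A n c) (closeTV B n c)
  | all T, n, c => all (closeTV T n (c + 1))
  | smul a T, n, c => smul a (closeTV T n c)
  | zero, _, _ => zero

/-- `T[U / X]` for a *free* type variable named `n` (no binder is removed). -/
def substFreeAux : STy S → ℕ → STy S → ℕ → STy S
  | var k, n, U, c => if k = n + c then shiftTV c 0 U else var k
  | arrow A B, n, U, c => arrow (substFreeAux A n U c) (substFreeAux B n U c)
  | all T, n, U, c => all (substFreeAux T n U (c + 1))
  | smul a T, n, U, c => smul a (substFreeAux T n U c)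
  | zero, _, _, _ => zero

def substFree (T : STy S) (n : ℕ) (U : STy S) : STy S := substFreeAux T n U 0

/-- Free type variables. -/
def ftvAux : STy S → ℕ → Finset ℕ
  | var k, c => if k < c then ∅ else {k - c}
  | arrow A B, c => ftvAux A c ∪ ftvAux B c
  | all T, c => ftvAux T (c + 1)
  | smul _ T, c => ftvAux T c
  | zero, _ => ∅

def ftv (T : STy S) : Finset ℕ := ftvAux T 0

end STy

/-- Free type variables of a context. -/
def ftvCtx {S : Type} (Γ : List (STy S)) : Finset ℕ :=
  Γ.foldr (fun T s => T.ftv ∪ s) ∅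

/-- Type equivalence `≡`: the least congruence with
`α.0̄ ≡ 0̄`, `0.T ≡ 0̄`, `1.T ≡ T`, `α.(β.T) ≡ (α×β).T`, `∀X.α.T ≡ α.∀X.T`. -/
inductive SEq {S : Type} [CommRing S] : STy S → STy S → Prop
  | refl (T : STy S) : SEq T T
  | symm {T T' : STy S} : SEq T T' → SEq T' T
  | trans {T T' T'' : STy S} : SEq T T' → SEq T' T'' → SEq T T''
  | smulZero (a : S) : SEq (STy.smul a STy.zero) STy.zero
  | zeroSmul (T : STy S) : SEq (STy.smul 0 T) STy.zero
  | oneSmul (T : STy S) : SEq (STy.smul 1 T) T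
  | smulSmul (a b : S) (T : STy S) : SEq (STy.smul a (STy.smul b T)) (STy.smul (a * b) T)
  | allSmul (a : S) (T : STy S) : SEq (STy.all (STy.smul a T)) (STy.smul a (STy.all T))
  | arrowCong {U U' T T' : STy S} : SEq U U' → SEq T T' → SEq (STy.arrow U T) (STy.arrow U' T')
  | allCong {T T' : STy S} : SEq T T' → SEq (STy.all T) (STy.all T')
  | smulCong (a : S) {T T' : STy S} : SEq T T' → SEq (STy.smul a T) (STy.smul a T')

/-- `T ≺ R` iff either `R ≡ ∀X.T`, or `T ≡ ∀X.S` and `R ≡ S[U/X]` for some unit type `U`. -/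
def Prec {S : Type} [CommRing S] (T R : STy S) : Prop :=
  (∃ n : ℕ, SEq R (STy.all (STy.closeTV T n 0))) ∨
  (∃ Sb U : STy S, STy.IsUnit U ∧ SEq T (STy.all Sb) ∧ SEq R (STy.substTV Sb U 0))

/-- `⪯` : reflexive and transitive closure of `≺`. -/
def PrecEq {S : Type} [CommRing S] : STy S → STy S → Prop := Relation.ReflTransGen Prec

/-! ### The Scalar typing judgment -/

inductive Typ {S : Type} [CommRing S] : List (STy S) → Trm S → STy S → Prop
  | ax {Γ : List (STy S)} {n : ℕ} {U : STy S} : Γ[n]? = some U → Typ Γ (Trm.var n) U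
  | equiv {Γ : List (STy S)} {t : Trm S} {T T' : STy S} : Typ Γ t T → SEq T T' → Typ Γ t T'
  | arrE {Γ : List (STy S)} {t r : Trm S} {U T : STy S} {a b : S} :
      Typ Γ t (STy.smul a (STy.arrow U T)) → Typ Γ r (STy.smul b U) →
      Typ Γ (Trm.app t r) (STy.smul (a * b) T)
  | arrI {Γ : List (STy S)} {t : Trm S} {U T : STy S} :
      STy.IsUnit U → Typ (U :: Γ) t T → Typ Γ (Trm.lam t) (STy.arrow U T)
  | allE {Γ : List (STy S)} {t : Trm S} {T U : STy S} :
      Typ Γ t (STy.all T) → STy.IsUnit U → Typ Γ t (STy.substTV T U 0)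
  | allI {Γ : List (STy S)} {t : Trm S} {T : STy S} :
      Typ (Γ.map (STy.shiftTV 1 0)) t T → Typ Γ t (STy.all T)
  | ax0 {Γ : List (STy S)} : Typ Γ Trm.zero STy.zero
  | addI {Γ : List (STy S)} {t r : Trm S} {T : STy S} {a b : S} :
      Typ Γ t (STy.smul a T) → Typ Γ r (STy.smul b T) →
      Typ Γ (Trm.add t r) (STy.smul (a + b) T)
  | smulI {Γ : List (STy S)} {t : Trm S} {T : STy S} (a : S) :
      Typ Γ t T → Typ Γ (Trm.smul a t) (STy.smul a T)

/-! ### λ2^la -/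

inductive FTy : Type where
  | var : ℕ → FTy
  | arrow : FTy → FTy → FTy
  | all : FTy → FTy

namespace FTy

def shiftTV (d : ℕ) : ℕ → FTy → FTy
  | c, var k => if k < c then var k else var (k + d)
  | c, arrow A B => arrow (shiftTV d c A) (shiftTV d c B)
  | c, all A => all (shiftTV d (c + 1) A)

def substTV : FTy → FTy → ℕ → FTy
  | var k, B, j => if k = j then shiftTV j 0 B else if j < k then var (k - 1) else var k
  | arrow A C, B, j => arrow (substTV A B j) (substTV C B j)
  | all A, B, j => all (substTV A B (j + 1))

end FTy

/-- The typing judgment of λ2^la : System F rules over Lineal terms plus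
`ax0`, `+I` and `sI`. -/
inductive FTyp {S : Type} [CommRing S] : List FTy → Trm S → FTy → Prop
  | ax {Γ : List FTy} {n : ℕ} {A : FTy} : Γ[n]? = some A → FTyp Γ (Trm.var n) A
  | arrE {Γ : List FTy} {t r : Trm S} {A B : FTy} :
      FTyp Γ t (FTy.arrow A B) → FTyp Γ r A → FTyp Γ (Trm.app t r) B
  | arrI {Γ : List FTy} {t : Trm S} {A B : FTy} :
      FTyp (A :: Γ) t B → FTyp Γ (Trm.lam t) (FTy.arrow A B)
  | allE {Γ : List FTy} {t : Trm S} {A : FTy} (B : FTy) :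
      FTyp Γ t (FTy.all A) → FTyp Γ t (FTy.substTV A B 0)
  | allI {Γ : List FTy} {t : Trm S} {A : FTy} :
      FTyp (Γ.map (FTy.shiftTV 1 0)) t A → FTyp Γ t (FTy.all A)
  | ax0 {Γ : List FTy} (A : FTy) : FTyp Γ Trm.zero A
  | addI {Γ : List FTy} {t r : Trm S} {A : FTy} :
      FTyp Γ t A → FTyp Γ r A → FTyp Γ (Trm.add t r) A
  | smulI {Γ : List FTy} {t : Trm S} {A : FTy} (a : S) :
      FTyp Γ t A → FTyp Γ (Trm.smul a t) A

/-! ### Saturated sets and the interpretation of λ2^la types -/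

/-- Saturated subsets of SN. -/
structure IsSaturated {S : Type} [CommRing S] (X : Set (Trm S)) : Prop where
  subset_sn : X ⊆ SNset S
  var_app : ∀ (n : ℕ) (l : List (Trm S)), (∀ u ∈ l, u ∈ SNset S) →
      Trm.appList (Trm.var n) l ∈ X
  beta_exp : ∀ (v b : Trm S) (l : List (Trm S)), b.IsBasis →
      Trm.appList (Trm.subst v b 0) l ∈ X → Trm.appList (Trm.app (Trm.lam v) b) l ∈ X
  add_mem : ∀ {t u : Trm S}, t ∈ X → u ∈ X → Trm.add t u ∈ X
  smul_iff : ∀ (a : S) (t : Trm S), t ∈ X ↔ Trm.smul a t ∈ X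
  sum_app : ∀ (u : Trm S) (us l : List (Trm S)),
      (∀ v ∈ u :: us, Trm.appList v l ∈ X) → Trm.appList (Trm.sumList u us) l ∈ X
  app_sum : ∀ (t v : Trm S) (vs l : List (Trm S)),
      (∀ w ∈ v :: vs, Trm.appList (Trm.app t w) l ∈ X) →
      Trm.appList (Trm.app t (Trm.sumList v vs)) l ∈ X
  smul_head : ∀ (a : S) (t : Trm S) (l : List (Trm S)),
      Trm.smul a (Trm.appList t l) ∈ X ↔ Trm.appList (Trm.smul a t) l ∈ X
  smul_arg : ∀ (a : S) (t : Trm S) (l₁ : List (Trm S)) (u : Trm S) (l₂ : List (Trm S)),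
      Trm.smul a (Trm.appList t (l₁ ++ u :: l₂)) ∈ X ↔
      Trm.appList t (l₁ ++ Trm.smul a u :: l₂) ∈ X
  zero_mem : Trm.zero ∈ X
  zero_app : ∀ l : List (Trm S), (∀ u ∈ l, u ∈ SNset S) → Trm.appList Trm.zero l ∈ X
  app_zero : ∀ (t : Trm S) (l : List (Trm S)), t ∈ SNset S → (∀ u ∈ l, u ∈ SNset S) →
      Trm.appList (Trm.app t Trm.zero) l ∈ X

/-- Extension of a type-variable valuation (de Bruijn). -/
def consVal {S : Type} (Y : Set (Trm S)) (ξ : ℕ → Set (Trm S)) : ℕ → Set (Trm S)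
  | 0 => Y
  | n + 1 => ξ n

/-- Interpretation `⟦A⟧_ξ` of a λ2^la type. -/
def FTy.interp {S : Type} [CommRing S] : FTy → (ℕ → Set (Trm S)) → Set (Trm S)
  | FTy.var n, ξ => ξ n
  | FTy.arrow A B, ξ => { F | ∀ s ∈ interp A ξ, Trm.app F s ∈ interp B ξ }
  | FTy.all A, ξ => ⋂ Y ∈ { X : Set (Trm S) | IsSaturated X }, interp A (consVal Y ξ)

/-- `ρ, ξ ⊨ Γ`. -/
def SatCtx {S : Type} [CommRing S] (ρ : ℕ → Trm S) (ξ : ℕ → Set (Trm S))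
    (Γ : List FTy) : Prop :=
  ∀ (n : ℕ) (A : FTy), Γ[n]? = some A → ρ n ∈ FTy.interp A ξ

/-- The `♮` map erasing scalars, sending `0̄` to a fixed λ2^la type `A`. -/
def STy.flat {S : Type} (A : FTy) : STy S → FTy
  | STy.var n => FTy.var n
  | STy.arrow U T => FTy.arrow (flat A U) (flat A T)
  | STy.all T => FTy.all (flat A T)
  | STy.smul _ T => flat A T
  | STy.zero => A

end Lineal
namespace Lineal

/-! ### Auxiliary development for Statement 11 -/

namespace STy

variable {S : Type}

/-- Iterated `∀`. -/
def allK : ℕ → STy S → STy S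
  | 0, T => T
  | k+1, T => all (allK k T)

/-- Instantiate a stack of `k = Ws.length` pending binders, outermost first. -/
def instK : STy S → List (STy S) → STy S
  | G, [] => G
  | G, W :: Ws => instK (substTV G W Ws.length) Ws

/-- All raw de Bruijn indices occurring in `T` are `< p`. -/
def rawLt (p : ℕ) : STy S → Prop
  | var k => k < p
  | arrow A B => rawLt p A ∧ rawLt p B
  | all T => rawLt p T
  | smul _ T => rawLt p T
  | zero => True

def rawBound : STy S → ℕ
  | var k => k + 1
  | arrow A B => max (rawBound A) (rawBound B)
  | all T => rawBound T
  | smul _ T => rawBound T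
  | zero => 0

lemma rawLt_of_le : ∀ (T : STy S) (p : ℕ), rawBound T ≤ p → rawLt p T := by
  intro T
  induction T with
  | var k => intro p h; simpa [rawBound, rawLt] using h
  | arrow A B ihA ihB =>
      intro p h
      simp only [rawBound, max_le_iff] at h
      exact ⟨ihA p h.1, ihB p h.2⟩
  | all T ih => intro p h; exact ih p h
  | smul a T ih => intro p h; exact ih p h
  | zero => intro p h; trivial

/-! #### A model of `SEq` -/

/-- Scalar-extracted normal form: `nf T = (α, core)` with `T ≡ α · core`. -/
def nf [CommRing S] : STy S → S × STy S
  | var n => (1, var n)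
  | zero => (0, zero)
  | all T => ((nf T).1, all (nf T).2)
  | smul a T => (a * (nf T).1, (nf T).2)
  | arrow A B => (1, arrow (smul (nf A).1 (nf A).2) (smul (nf B).1 (nf B).2))

/-- Equality of cores (scalars compared with the `0`-wildcard). -/
def CEq [CommRing S] : STy S → STy S → Prop
  | var n, var m => n = m
  | zero, zero => True
  | all A, all B => CEq A B
  | arrow A B, arrow A' B' => CEq A A' ∧ CEq B B'
  | smul a A, smul b B => a = b ∧ (a = 0 ∨ CEq A B)
  | _, _ => False

def pEq [CommRing S] (x y : S × STy S) : Prop :=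
  x.1 = y.1 ∧ (x.1 = 0 ∨ CEq x.2 y.2)

variable [CommRing S]

lemma ceq_refl : ∀ T : STy S, CEq T T := by
  intro T
  induction T with
  | var n => simp [CEq]
  | arrow A B ihA ihB => exact ⟨ihA, ihB⟩
  | all T ih => exact ih
  | smul a T ih => exact ⟨rfl, Or.inr ih⟩
  | zero => trivial

lemma ceq_symm : ∀ T U : STy S, CEq T U → CEq U T := by
  intro T
  induction T with
  | var n => intro U h; cases U <;> simp_all [CEq]
  | arrow A B ihA ihB =>
      intro U h; cases U <;> simp only [CEq] at h ⊢
      exact ⟨ihA _ h.1, ihB _ h.2⟩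
  | all T ih =>
      intro U h; cases U <;> simp only [CEq] at h ⊢
      exact ih _ h
  | smul a T ih =>
      intro U h; cases U <;> simp only [CEq] at h ⊢
      obtain ⟨rfl, h2⟩ := h
      exact ⟨rfl, h2.imp id (ih _)⟩
  | zero => intro U h; cases U <;> simp_all [CEq]

lemma ceq_trans : ∀ T U V : STy S, CEq T U → CEq U V → CEq T V := by
  intro T
  induction T with
  | var n => intro U V h1 h2; cases U <;> cases V <;> simp_all [CEq]
  | arrow A B ihA ihB =>
      intro U V h1 h2; cases U <;> cases V <;> simp only [CEq] at h1 h2 ⊢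
      exact ⟨ihA _ _ h1.1 h2.1, ihB _ _ h1.2 h2.2⟩
  | all T ih =>
      intro U V h1 h2; cases U <;> cases V <;> simp only [CEq] at h1 h2 ⊢
      exact ih _ _ h1 h2
  | smul a T ih =>
      intro U V h1 h2; cases U <;> cases V <;> simp only [CEq] at h1 h2 ⊢
      obtain ⟨rfl, h1'⟩ := h1
      obtain ⟨rfl, h2'⟩ := h2
      refine ⟨rfl, ?_⟩
      rcases h1' with h | h
      · exact Or.inl h
      · rcases h2' with h' | h'
        · exact Or.inl h'
        · exact Or.inr (ih _ _ h h')
  | zero => intro U V h1 h2; cases U <;> cases V <;> simp_all [CEq]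

lemma seq_sound {T T' : STy S} (h : SEq T T') : pEq (nf T) (nf T') := by
  induction h with
  | refl T => exact ⟨rfl, Or.inr (ceq_refl _)⟩
  | symm _ ih =>
      obtain ⟨h1, h2⟩ := ih
      exact ⟨h1.symm, by rw [← h1] at *; exact h2.imp id (ceq_symm _ _)⟩
  | trans _ _ ih1 ih2 =>
      obtain ⟨e1, d1⟩ := ih1
      obtain ⟨e2, d2⟩ := ih2
      refine ⟨e1.trans e2, ?_⟩
      rcases d1 with h | h
      · exact Or.inl h
      · rcases d2 with h' | h'
        · exact Or.inl (e1.trans h')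
        · exact Or.inr (ceq_trans _ _ _ h h')
  | smulZero a => exact ⟨by simp [nf], Or.inr trivial⟩
  | zeroSmul T => exact ⟨by simp [nf], Or.inl (by simp [nf])⟩
  | oneSmul T => exact ⟨by simp [nf], Or.inr (ceq_refl _)⟩
  | smulSmul a b T => exact ⟨by simp [nf, mul_assoc], Or.inr (ceq_refl _)⟩
  | allSmul a T => exact ⟨rfl, Or.inr (ceq_refl _)⟩
  | arrowCong _ _ ih1 ih2 =>
      refine ⟨rfl, Or.inr ?_⟩
      exact ⟨⟨ih1.1, ih1.2⟩, ⟨ih2.1, ih2.2⟩⟩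
  | allCong _ ih => exact ⟨ih.1, ih.2⟩
  | smulCong a _ ih =>
      refine ⟨by rw [nf, nf, ih.1], ?_⟩
      rcases ih.2 with h | h
      · exact Or.inl (by simp [nf, h])
      · exact Or.inr h

lemma seq_pack : ∀ T : STy S, SEq T (smul (nf T).1 (nf T).2) := by
  intro T
  induction T with
  | var n => exact (SEq.oneSmul _).symm
  | arrow A B ihA ihB => exact (SEq.arrowCong ihA ihB).trans (SEq.oneSmul _).symm
  | all T ih => exact (SEq.allCong ih).trans (SEq.allSmul _ _)
  | smul a T ih => exact (SEq.smulCong a ih).trans (SEq.smulSmul _ _ _)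
  | zero => exact (SEq.zeroSmul _).symm

lemma ceq_seq : ∀ T U : STy S, CEq T U → SEq T U := by
  intro T
  induction T with
  | var n => intro U h; cases U <;> simp_all [CEq]; exact SEq.refl _
  | arrow A B ihA ihB =>
      intro U h; cases U <;> simp only [CEq] at h <;> try exact absurd h not_false
      exact SEq.arrowCong (ihA _ h.1) (ihB _ h.2)
  | all T ih =>
      intro U h; cases U <;> simp only [CEq] at h <;> try exact absurd h not_false
      exact SEq.allCong (ih _ h)
  | smul a T ih =>
      intro U h; cases U <;> simp only [CEq] at h <;> try exact absurd h not_false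
      obtain ⟨rfl, h2⟩ := h
      rcases h2 with rfl | h2
      · exact (SEq.zeroSmul _).trans (SEq.zeroSmul _).symm
      · exact SEq.smulCong _ (ih _ h2)
  | zero => intro U h; cases U <;> simp_all [CEq]; exact SEq.refl _

lemma pEq_seq {T U : STy S} (h : pEq (nf T) (nf U)) : SEq T U := by
  refine (seq_pack T).trans (SEq.trans ?_ (seq_pack U).symm)
  obtain ⟨h1, h2⟩ := h
  rw [h1]
  rcases h2 with h2 | h2
  · rw [h1] at h2
    rw [h2]
    exact (SEq.zeroSmul _).trans (SEq.zeroSmul _).symm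
  · exact SEq.smulCong _ (ceq_seq _ _ h2)

lemma seq_arrow_all (h10 : (1:S) ≠ 0) {A B C : STy S} :
    ¬ SEq (arrow A B) (all C) := by
  intro h
  obtain ⟨h1, h2⟩ := seq_sound h
  rcases h2 with h2 | h2
  · exact h10 (by simpa [nf] using h2)
  · simp [nf, CEq] at h2

lemma seq_all_inj {A B : STy S} (h : SEq (all A) (all B)) : SEq A B := by
  obtain ⟨h1, h2⟩ := seq_sound h
  refine pEq_seq ⟨h1, ?_⟩
  exact h2.imp (fun x => x) (fun x => x)

end STy

namespace STy

variable {S : Type}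

/-! #### Small computation helpers -/

lemma substTV_var_self (W : STy S) (j : ℕ) : substTV (var j) W j = shiftTV j 0 W := by
  rw [substTV, if_pos rfl]

lemma substTV_var_gt (W : STy S) {k j : ℕ} (h : j < k) : substTV (var k) W j = var (k-1) := by
  rw [substTV, if_neg (by omega), if_pos h]

lemma substTV_var_lt (W : STy S) {k j : ℕ} (h : k < j) : substTV (var k) W j = var k := by
  rw [substTV, if_neg (by omega), if_neg (by omega)]

lemma substFreeAux_var_self (W : STy S) (m c : ℕ) :
    substFreeAux (var (m + c)) m W c = shiftTV c 0 W := by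
  rw [substFreeAux, if_pos rfl]

lemma substFreeAux_var_ne (W : STy S) {k m c : ℕ} (h : k ≠ m + c) :
    substFreeAux (var k) m W c = var k := by
  rw [substFreeAux, if_neg h]

lemma shiftTV_var0 (d q : ℕ) : shiftTV d 0 (var q : STy S) = var (q + d) := by
  rw [shiftTV, if_neg (by omega)]

lemma closeTV_var_lt {k c : ℕ} (m : ℕ) (h : k < c) : closeTV (var k : STy S) m c = var k := by
  rw [closeTV, if_pos h]

lemma closeTV_var_self (m c : ℕ) : closeTV (var (m + c) : STy S) m c = var c := by
  rw [closeTV, if_neg (by omega), if_pos rfl]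

lemma closeTV_var_ne {k c : ℕ} (m : ℕ) (h1 : ¬ k < c) (h2 : k ≠ m + c) :
    closeTV (var k : STy S) m c = var (k + 1) := by
  rw [closeTV, if_neg h1, if_neg h2]

/-- Substituting a variable that was freshly introduced by an over-shift. -/
lemma substTV_shiftTV (V : STy S) :
    ∀ (A : STy S) (c d j : ℕ), c ≤ j → j ≤ c + d →
      substTV (shiftTV (d + 1) c A) V j = shiftTV d c A := by
  intro A
  induction A with
  | var k =>
      intro c d j h1 h2
      by_cases hk : k < c
      · rw [shiftTV, if_pos hk, shiftTV, if_pos hk, substTV_var_lt V (by omega)]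
      · rw [shiftTV, if_neg hk, shiftTV, if_neg hk, substTV_var_gt V (by omega)]
        have : k + (d + 1) - 1 = k + d := by omega
        rw [this]
  | arrow A B ihA ihB =>
      intro c d j h1 h2
      simp only [shiftTV, substTV, ihA c d j h1 h2, ihB c d j h1 h2]
  | all T ih =>
      intro c d j h1 h2
      simp only [shiftTV, substTV, ih (c+1) d (j+1) (by omega) (by omega)]
  | smul a T ih =>
      intro c d j h1 h2
      simp only [shiftTV, substTV, ih c d j h1 h2]
  | zero => intro c d j _ _; rfl

/-- Key lemma: instantiating a freshly closed binder is a free substitution. -/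
lemma substTV_closeTV (W : STy S) :
    ∀ (G : STy S) (m c : ℕ), substTV (closeTV G m c) W c = substFreeAux G m W c := by
  intro G
  induction G with
  | var k =>
      intro m c
      by_cases h1 : k < c
      · rw [closeTV_var_lt m h1, substTV_var_lt W h1, substFreeAux_var_ne W (by omega)]
      · by_cases h2 : k = m + c
        · subst h2
          rw [closeTV_var_self, substTV_var_self, substFreeAux_var_self]
        · rw [closeTV_var_ne m h1 h2, substTV_var_gt W (by omega),
            substFreeAux_var_ne W h2]
          have : k + 1 - 1 = k := by omega
          rw [this]
  | arrow A B ihA ihB => intro m c; simp only [closeTV, substTV, substFreeAux, ihA, ihB]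
  | all T ih => intro m c; simp only [closeTV, substTV, substFreeAux, ih]
  | smul a T ih => intro m c; simp only [closeTV, substTV, substFreeAux, ih]
  | zero => intro m c; rfl

/-- Commuting a free substitution past the instantiation of a pending binder
by a variable `q` distinct from the name being freely substituted. -/
lemma substTV_substFreeAux (R : STy S) {m q : ℕ} (hqm : q ≠ m) :
    ∀ (H : STy S) (j : ℕ),
      substTV (substFreeAux H m R (j+1)) (var q) j
        = substFreeAux (substTV H (var q) j) m R j := by
  intro H
  induction H with
  | var v =>
      intro j
      by_cases h1 : v = m + (j + 1)
      · subst h1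
        rw [substFreeAux_var_self, substTV_shiftTV (var q) R 0 j j (by omega) (by omega),
          substTV_var_gt (var q) (by omega)]
        have : m + (j + 1) - 1 = m + j := by omega
        rw [this, substFreeAux_var_self]
      · rw [substFreeAux_var_ne R h1]
        rcases Nat.lt_trichotomy v j with hv | rfl | hv
        · rw [substTV_var_lt (var q) hv, substFreeAux_var_ne R (by omega)]
        · rw [substTV_var_self, shiftTV_var0, substFreeAux_var_ne R (by omega)]
        · rw [substTV_var_gt (var q) hv, substFreeAux_var_ne R (by omega)]
  | arrow A B ihA ihB => intro j; simp only [substFreeAux, substTV, ihA, ihB]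
  | all T ih => intro j; simp only [substFreeAux, substTV, ih]
  | smul a T ih => intro j; simp only [substFreeAux, substTV, ih]
  | zero => intro j; rfl

/-- Replacing the substituted type by a fresh variable, to be resubstituted freely. -/
lemma substTV_fresh (W : STy S) :
    ∀ (G : STy S) (p j : ℕ), rawLt p G →
      substTV G W j = substFreeAux (substTV G (var p) j) p W j := by
  intro G
  induction G with
  | var v =>
      intro p j hp
      simp only [rawLt] at hp
      rcases Nat.lt_trichotomy v j with hv | rfl | hv
      · rw [substTV_var_lt W hv, substTV_var_lt (var p) hv,
          substFreeAux_var_ne W (by omega)]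
      · rw [substTV_var_self, substTV_var_self, shiftTV_var0]
        have : p + v = p + v := rfl
        rw [show (p + v) = p + v from rfl, substFreeAux, if_pos (by omega)]
      · rw [substTV_var_gt W hv, substTV_var_gt (var p) hv,
          substFreeAux_var_ne W (by omega)]
  | arrow A B ihA ihB =>
      intro p j hp
      simp only [substTV, substFreeAux, ihA p j hp.1, ihB p j hp.2]
  | all T ih => intro p j hp; simp only [substTV, substFreeAux, ih p (j+1) hp]
  | smul a T ih => intro p j hp; simp only [substTV, substFreeAux, ih p j hp]
  | zero => intro p j _; rfl

/-- Iterated commutation of a free substitution past a stack of variable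
instantiations. -/
lemma instK_substFreeAux (R : STy S) (m : ℕ) :
    ∀ (ps : List ℕ) (H : STy S), (∀ q ∈ ps, q ≠ m) →
      instK (substFreeAux H m R ps.length) (ps.map var)
        = substFreeAux (instK H (ps.map var)) m R 0 := by
  intro ps
  induction ps with
  | nil => intro H _; rfl
  | cons p ps ih =>
      intro H hq
      simp only [List.map_cons, instK, List.length_map, List.length_cons]
      rw [substTV_substFreeAux R (hq p (by simp)) H ps.length]
      exact ih _ (fun q hq' => hq q (by simp [hq']))

lemma closeTV_allK : ∀ (k : ℕ) (G : STy S) (m c : ℕ),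
    closeTV (allK k G) m c = allK k (closeTV G m (c + k)) := by
  intro k
  induction k with
  | zero => intro G m c; rfl
  | succ k ih =>
      intro G m c
      show all (closeTV (allK k G) m (c+1)) = all (allK k (closeTV G m (c + (k+1))))
      rw [ih G m (c+1)]
      have : c + 1 + k = c + (k + 1) := by omega
      rw [this]

lemma substTV_allK : ∀ (k : ℕ) (G W : STy S) (j : ℕ),
    substTV (allK k G) W j = allK k (substTV G W (j + k)) := by
  intro k
  induction k with
  | zero => intro G W j; rfl
  | succ k ih =>
      intro G W j
      show all (substTV (allK k G) W (j+1)) = all (allK k (substTV G W (j + (k+1))))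
      rw [ih G W (j+1)]
      have : j + 1 + k = j + (k + 1) := by omega
      rw [this]

variable [CommRing S]

lemma seq_closeTV {A B : STy S} (h : SEq A B) :
    ∀ (m c : ℕ), SEq (closeTV A m c) (closeTV B m c) := by
  induction h with
  | refl T => exact fun m c => SEq.refl _
  | symm _ ih => exact fun m c => (ih m c).symm
  | trans _ _ ih1 ih2 => exact fun m c => (ih1 m c).trans (ih2 m c)
  | smulZero a => exact fun m c => SEq.smulZero a
  | zeroSmul T => exact fun m c => SEq.zeroSmul _
  | oneSmul T => exact fun m c => SEq.oneSmul _
  | smulSmul a b T => exact fun m c => SEq.smulSmul a b _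
  | allSmul a T => exact fun m c => SEq.allSmul a _
  | arrowCong _ _ ih1 ih2 => exact fun m c => SEq.arrowCong (ih1 m c) (ih2 m c)
  | allCong _ ih => exact fun m c => SEq.allCong (ih m (c+1))
  | smulCong a _ ih => exact fun m c => SEq.smulCong a (ih m c)

lemma seq_substTV {A B : STy S} (U : STy S) (h : SEq A B) :
    ∀ (j : ℕ), SEq (substTV A U j) (substTV B U j) := by
  induction h with
  | refl T => exact fun j => SEq.refl _
  | symm _ ih => exact fun j => (ih j).symm
  | trans _ _ ih1 ih2 => exact fun j => (ih1 j).trans (ih2 j)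
  | smulZero a => exact fun j => SEq.smulZero a
  | zeroSmul T => exact fun j => SEq.zeroSmul _
  | oneSmul T => exact fun j => SEq.oneSmul _
  | smulSmul a b T => exact fun j => SEq.smulSmul a b _
  | allSmul a T => exact fun j => SEq.allSmul a _
  | arrowCong _ _ ih1 ih2 => exact fun j => SEq.arrowCong (ih1 j) (ih2 j)
  | allCong _ ih => exact fun j => SEq.allCong (ih (j+1))
  | smulCong a _ ih => exact fun j => SEq.smulCong a (ih j)

end STy

/-- Types reachable (under a stack of `k` pending binders) from `A0` by
closing/instantiating type variables. -/
inductive Good {S : Type} (A0 : STy S) : ℕ → STy S → Prop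
  | base : Good A0 0 A0
  | close (m : ℕ) {k : ℕ} {G : STy S} : Good A0 k G → Good A0 (k+1) (STy.closeTV G m k)
  | inst {k : ℕ} {G : STy S} (W : STy S) : STy.IsUnit W → Good A0 (k+1) G →
      Good A0 k (STy.substTV G W k)

lemma good_arrow {S : Type} {V R : STy S} :
    ∀ {k G}, Good (STy.arrow V R) k G → ∃ A B, G = STy.arrow A B := by
  intro k G h
  induction h with
  | base => exact ⟨V, R, rfl⟩
  | close m _ ih =>
      obtain ⟨A, B, rfl⟩ := ih
      exact ⟨_, _, rfl⟩
  | inst W _ _ ih =>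
      obtain ⟨A, B, rfl⟩ := ih
      exact ⟨_, _, rfl⟩

private lemma le_foldr_max {q : ℕ} : ∀ {ps : List ℕ}, q ∈ ps → q ≤ ps.foldr max 0 := by
  intro ps
  induction ps with
  | nil => intro h; cases h
  | cons p ps ih =>
      intro h
      rcases List.mem_cons.mp h with rfl | h
      · exact le_max_left _ _
      · exact le_trans (ih h) (le_max_right _ _)

/-- Main combinatorial lemma: a `Good` type, with all pending binders
instantiated by sufficiently fresh variables, is a chain of free substitutions
of unit types out of `A0`. -/
theorem good_subst {S : Type} {A0 : STy S} :
    ∀ {k : ℕ} {G : STy S}, Good A0 k G →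
    ∃ N : ℕ, ∀ ps : List ℕ, ps.length = k → (∀ p ∈ ps, N ≤ p) →
      ∃ l : List (ℕ × STy S), (∀ pr ∈ l, STy.IsUnit pr.2) ∧
        STy.instK G (ps.map STy.var)
          = List.foldl (fun (A : STy S) pr => STy.substFree A pr.1 pr.2) A0 l := by
  intro k G h
  induction h with
  | base =>
      refine ⟨0, fun ps hlen _ => ?_⟩
      rw [List.length_eq_zero_iff] at hlen
      subst hlen
      exact ⟨[], by simp, rfl⟩
  | @close m k G _ ih =>
      obtain ⟨N, hN⟩ := ih
      refine ⟨max N (m+1), fun ps hlen hge => ?_⟩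
      match ps, hlen with
      | p :: ps, hlen =>
      have hlen' : ps.length = k := by simpa using hlen
      have hps : ∀ q ∈ ps, N ≤ q :=
        fun q hq => le_trans (le_max_left _ _) (hge q (List.mem_cons_of_mem _ hq))
      have hqm : ∀ q ∈ ps, q ≠ m := by
        intro q hq
        have := hge q (List.mem_cons_of_mem _ hq)
        omega
      obtain ⟨l, hl, heq⟩ := hN ps hlen' hps
      refine ⟨l ++ [(m, STy.var p)], ?_, ?_⟩
      · intro pr hpr
        rcases List.mem_append.mp hpr with h | h
        · exact hl pr h
        · simp at h; subst h; exact STy.IsUnit.var p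
      · have step1 : STy.instK (STy.closeTV G m k) ((p :: ps).map STy.var)
            = STy.instK (STy.substFreeAux G m (STy.var p) ps.length) (ps.map STy.var) := by
          simp only [List.map_cons, STy.instK, List.length_map, hlen']
          rw [STy.substTV_closeTV (STy.var p) G m k]
        rw [step1, STy.instK_substFreeAux (STy.var p) m ps G hqm, heq, List.foldl_append]
        rfl
  | @inst k G W hWu _ ih =>
      obtain ⟨N, hN⟩ := ih
      refine ⟨N, fun ps hlen hge => ?_⟩
      set p0 : ℕ := max (STy.rawBound G) (max N (ps.foldr max 0 + 1)) with hp0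
      have hfresh : STy.rawLt p0 G :=
        STy.rawLt_of_le G p0 (le_max_left _ _)
      have hp0N : N ≤ p0 := le_trans (le_max_left _ _) (le_max_right _ _)
      have hp0ps : ∀ q ∈ ps, q ≠ p0 := by
        intro q hq
        have h1 : q ≤ ps.foldr max 0 := le_foldr_max hq
        have h2 : ps.foldr max 0 + 1 ≤ p0 := le_trans (le_max_right _ _) (le_max_right _ _)
        omega
      obtain ⟨l, hl, heq⟩ := hN (p0 :: ps) (by simp [hlen])
        (by
          intro q hq
          rcases List.mem_cons.mp hq with rfl | hq
          · exact hp0N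
          · exact hge q hq)
      refine ⟨l ++ [(p0, W)], ?_, ?_⟩
      · intro pr hpr
        rcases List.mem_append.mp hpr with h | h
        · exact hl pr h
        · simp at h; subst h; exact hWu
      · have step1 : STy.instK (STy.substTV G W k) (ps.map STy.var)
            = STy.instK (STy.substFreeAux (STy.substTV G (STy.var p0) k) p0 W ps.length)
                (ps.map STy.var) := by
          rw [hlen, STy.substTV_fresh W G p0 k hfresh]
        have step2 : STy.instK G ((p0 :: ps).map STy.var)
            = STy.instK (STy.substTV G (STy.var p0) k) (ps.map STy.var) := by
          simp only [List.map_cons, STy.instK, List.length_map, hlen]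
        rw [step1, STy.instK_substFreeAux W p0 ps _ hp0ps, ← step2, heq, List.foldl_append]
        rfl

/-- Invariant along a `⪯`-chain out of `V→R`. -/
theorem precEq_inv {S : Type} [CommRing S] (h10 : (1:S) ≠ 0) {V R X : STy S}
    (h : PrecEq (STy.arrow V R) X) :
    ∃ (k : ℕ) (G : STy S), SEq X (STy.allK k G) ∧ Good (STy.arrow V R) k G := by
  induction h with
  | refl => exact ⟨0, STy.arrow V R, SEq.refl _, Good.base⟩
  | @tail b c _ hbc ih =>
      obtain ⟨k, G, hseq, hgood⟩ := ih
      rcases hbc with ⟨n, hcl⟩ | ⟨Sb, W, hWu, hSb, hsub⟩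
      · refine ⟨k+1, STy.closeTV G n k, ?_, Good.close n hgood⟩
        have h1 : SEq (STy.closeTV b n 0) (STy.closeTV (STy.allK k G) n 0) :=
          STy.seq_closeTV hseq n 0
        have h2 : STy.closeTV (STy.allK k G) n 0 = STy.allK k (STy.closeTV G n k) := by
          rw [STy.closeTV_allK k G n 0]
          simp
        exact hcl.trans (SEq.allCong (h1.trans (by rw [h2]; exact SEq.refl _)))
      · cases k with
        | zero =>
            obtain ⟨A, B, rfl⟩ := good_arrow hgood
            exact absurd (hseq.symm.trans hSb) (STy.seq_arrow_all h10)
        | succ k' =>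
            have h1 : SEq (STy.all Sb) (STy.all (STy.allK k' G)) := hSb.symm.trans hseq
            have h2 : SEq Sb (STy.allK k' G) := STy.seq_all_inj h1
            have h3 : SEq (STy.substTV Sb W 0) (STy.substTV (STy.allK k' G) W 0) :=
              STy.seq_substTV W h2 0
            have h4 : STy.substTV (STy.allK k' G) W 0 = STy.allK k' (STy.substTV G W k') := by
              rw [STy.substTV_allK k' G W 0]
              simp
            refine ⟨k', STy.substTV G W k', ?_, Good.inst W hWu hgood⟩
            exact hsub.trans (h3.trans (by rw [h4]; exact SEq.refl _))


/-- **Arrows comparison.**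
If `V→R ⪯ U→T` then `U→T ≡ (V→R)[W₁/X₁]…[Wₙ/Xₙ]` for some unit types `W₁,…,Wₙ` and
type variables `X₁,…,Xₙ`. -/
theorem arrows_comparison {S : Type} [CommRing S] (U V : STy S) (T R : STy S)
    (hU : STy.IsUnit U) (hV : STy.IsUnit V) (hT : STy.WF T) (hR : STy.WF R)
    (h : PrecEq (STy.arrow V R) (STy.arrow U T)) :
    ∃ l : List (ℕ × STy S), (∀ p ∈ l, STy.IsUnit p.2) ∧
      SEq (STy.arrow U T)
        (l.foldl (fun (A : STy S) p => STy.substFree A p.1 p.2) (STy.arrow V R)) := by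
  classical
  by_cases h10 : (1:S) = 0
  · refine ⟨[], by simp, ?_⟩
    have hz : ∀ X : STy S, SEq X STy.zero := fun X =>
      (SEq.oneSmul X).symm.trans (by rw [h10]; exact SEq.zeroSmul X)
    exact (hz _).trans (hz _).symm
  · obtain ⟨k, G, hseq, hgood⟩ := precEq_inv h10 h
    cases k with
    | succ k' => exact absurd hseq (STy.seq_arrow_all h10)
    | zero =>
      obtain ⟨N, hC⟩ := good_subst hgood
      obtain ⟨l, hl, heq⟩ := hC [] rfl (by simp)
      exact ⟨l, hl, by rw [← heq]; exact hseq⟩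


end Lineal
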